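/- arXiv:2504.05661 — 3 statements merged into one kernel-verified Lean document; each statement's English description precedes it below -/
import Mathlib

section
/- Let b(x) = log(1 + exp(x)). Then for all real η₁, η₂, the ratio b''(η₁)/b''(η₂) is at most exp(3|η₁ − η₂|), where b''(η) = e^η/(1+e^η)². -/
/-- For the logistic cumulant `b x = log (1 + exp x)`, whose second derivative is
`b'' η = exp η / (1 + exp η)^2`, the ratio `b'' η₁ / b'' η₂` is at most `exp (3 |η₁ - η₂|)`. -/
theorem logistic_second_deriv_ratio (η₁ η₂ : ℝ) :
    (Real.exp η₁ / (1 + Real.exp η₁) ^ 2) / (Real.exp η₂ / (1 + Real.exp η₂) ^ 2)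
      ≤ Real.exp (3 * |η₁ - η₂|) := by
  set A := Real.exp η₁ with hA'
  set B := Real.exp η₂ with hB'
  set E := Real.exp |η₁ - η₂| with hE'
  have hA : 0 < A := Real.exp_pos _
  have hB : 0 < B := Real.exp_pos _
  have h1 : A ≤ E * B := by
    rw [hA', hB', hE', ← Real.exp_add]
    exact Real.exp_le_exp.2 (by linarith [le_abs_self (η₁ - η₂)])
  have h2 : B ≤ E * A := by
    rw [hA', hB', hE', ← Real.exp_add]
    exact Real.exp_le_exp.2 (by linarith [neg_abs_le (η₁ - η₂)])
  have h3 : (1:ℝ) ≤ E := Real.one_le_exp (abs_nonneg _)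
  have he : Real.exp (3 * |η₁ - η₂|) = E * E * E := by
    rw [hE', ← Real.exp_add, ← Real.exp_add]; ring_nf
  rw [he]
  have key : A * (1 + B)^2 ≤ E * E * E * (B * (1 + A)^2) := by
    nlinarith [mul_pos hA hB, sq_nonneg (1 + A), sq_nonneg (1 + B),
      mul_le_mul h2 h2 hB.le (by positivity : (0:ℝ) ≤ E * A),
      mul_le_mul_of_nonneg_right h1 (sq_nonneg (1 + A)),
      mul_nonneg hA.le hB.le, mul_nonneg (mul_nonneg hA.le hA.le) hB.le]
  have hlhs : (A / (1 + A) ^ 2) / (B / (1 + B) ^ 2)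
      = A * (1 + B)^2 / ((1 + A)^2 * B) := by
    field_simp
  rw [hlhs, div_le_iff₀ (by positivity)]
  nlinarith [key]
end

section
/- Under the assumptions of the previous Fisher-smoothness result, for every u ∈ ℝ^p and θ' with ‖F^{1/2}(θ'−θ)‖₂ ≤ r, one has (1 − τ₃r)‖F^{1/2}u‖₂² ≤ ⟨(−∇²f(θ'))u, u⟩ ≤ (1 + τ₃r)‖F^{1/2}u‖₂². -/
open Matrix

/-- The Hessian matrix of `f : ℝ^p → ℝ` at `x`. -/
noncomputable def hessMat {p : ℕ} (f : (Fin p → ℝ) → ℝ) (x : Fin p → ℝ) :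
    Matrix (Fin p) (Fin p) ℝ :=
  Matrix.of fun i j => iteratedFDeriv ℝ 2 f x ![Pi.single i 1, Pi.single j 1]

/-- The trilinear action `⟨∇³f(x), z ⊗ z ⊗ z⟩` of the third derivative of `f` at `x`. -/
noncomputable def d3 {p : ℕ} (f : (Fin p → ℝ) → ℝ) (x z : Fin p → ℝ) : ℝ :=
  iteratedFDeriv ℝ 3 f x ![z, z, z]

section FisherHelpers


lemma fisher_core (A B C D τ : ℝ)
    (h : ∀ c s : ℝ, c^2 + s^2 = 1 →
      |c^3*A + 3*(c^2*s)*B + 3*(c*s^2)*C + s^3*D| ≤ τ) :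
    ∀ a b : ℝ, a^2 + b^2 = 1 → |a*A + b*B| ≤ τ := by
  intro a b hab
  have hz : (Complex.mk a b) ≠ 0 := by
    intro hz
    rw [Complex.ext_iff] at hz
    simp only [Complex.zero_re, Complex.zero_im] at hz
    rw [hz.1, hz.2] at hab; norm_num at hab
  have habs : ‖Complex.mk a b‖ = 1 := by
    rw [Complex.norm_def, Complex.normSq_mk]
    rw [show a * a + b * b = 1 by nlinarith]
    exact Real.sqrt_one
  set θ := Complex.arg (Complex.mk a b) with hθ
  have hca : Real.cos θ = a := by
    rw [hθ, Complex.cos_arg hz, habs]; simp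
  have hsa : Real.sin θ = b := by
    rw [hθ, Complex.sin_arg, habs]; simp
  set c := Real.cos (θ/3) with hc
  set s := Real.sin (θ/3) with hs
  have hcs : c^2 + s^2 = 1 := by rw [hc, hs]; exact Real.cos_sq_add_sin_sq _
  have ha : a = 4*c^3 - 3*c := by
    rw [← hca, show θ = 3 * (θ/3) by ring, Real.cos_three_mul]
  have hb : b = 3*s - 4*s^3 := by
    rw [← hsa, show θ = 3 * (θ/3) by ring, Real.sin_three_mul]
  set q := Real.sqrt 3 with hqdef
  have hq : q^2 = 3 := Real.sq_sqrt (by norm_num)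
  set c₁ := (-c - q*s)/2 with hc₁
  set s₁ := (-s + q*c)/2 with hs₁
  set c₂ := (-c + q*s)/2 with hc₂
  set s₂ := (-s - q*c)/2 with hs₂
  have h1 : c₁^2 + s₁^2 = 1 := by
    rw [hc₁, hs₁]; linear_combination ((1/4:ℝ)*s^2+(1/4:ℝ)*c^2) * hq + hcs
  have h2 : c₂^2 + s₂^2 = 1 := by
    rw [hc₂, hs₂]; linear_combination ((1/4:ℝ)*s^2+(1/4:ℝ)*c^2) * hq + hcs
  set w₀ := ((1+2*(c^2-s^2))/3)^2 with hw₀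
  set w₁ := ((1-(c^2-s^2)+2*(q*(c*s)))/3)^2 with hw₁
  set w₂ := ((1-(c^2-s^2)-2*(q*(c*s)))/3)^2 with hw₂
  have hw0n : 0 ≤ w₀ := sq_nonneg _
  have hw1n : 0 ≤ w₁ := sq_nonneg _
  have hw2n : 0 ≤ w₂ := sq_nonneg _
  have hwsum : w₀ + w₁ + w₂ = 1 := by
    rw [hw₀, hw₁, hw₂]
    linear_combination ((8/9:ℝ)*c^2*s^2)*hq + ((2/3:ℝ)+(2/3:ℝ)*s^2+(2/3:ℝ)*c^2)*hcs
  set P₀ := c^3*A + 3*(c^2*s)*B + 3*(c*s^2)*C + s^3*D with hP₀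
  set P₁ := c₁^3*A + 3*(c₁^2*s₁)*B + 3*(c₁*s₁^2)*C + s₁^3*D with hP₁
  set P₂ := c₂^3*A + 3*(c₂^2*s₂)*B + 3*(c₂*s₂^2)*C + s₂^3*D with hP₂
  have hb0 : |P₀| ≤ τ := h c s hcs
  have hb1 : |P₁| ≤ τ := h c₁ s₁ h1
  have hb2 : |P₂| ≤ τ := h c₂ s₂ h2
  have key : a*A + b*B = w₀*P₀ + w₁*P₁ + w₂*P₂ := by
    rw [ha, hb, hP₀, hP₁, hP₂, hw₀, hw₁, hw₂, hc₁, hs₁, hc₂, hs₂]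
    linear_combination
      ((1/12:ℝ)*s^3*B + (1/6:ℝ)*s^5*B + (1/12:ℝ)*s^7*B + (-1/6:ℝ)*c*s^2*C + (1/12:ℝ)*c*s^2*A + (1/2:ℝ)*c*s^4*A + (1/9:ℝ)*c*s^4*q^2*A + (1/6:ℝ)*c*s^6*C + (5/12:ℝ)*c*s^6*A + (1/9:ℝ)*c*s^6*q^2*A + (1/12:ℝ)*c^2*s*D + (-1/6:ℝ)*c^2*s*B + (-1/6:ℝ)*c^2*s^3*D + (-5/6:ℝ)*c^2*s^3*B + (-1/3:ℝ)*c^2*s^3*q^2*B + (-5/36:ℝ)*c^2*s^5*D + (1/3:ℝ)*c^2*s^5*B + (1/12:ℝ)*c^3*C + (5/6:ℝ)*c^3*s^2*C + (1/6:ℝ)*c^3*s^2*A + (1/3:ℝ)*c^3*s^2*q^2*C + (-5/4:ℝ)*c^3*s^4*C + (5/6:ℝ)*c^3*s^4*A + (-1/3:ℝ)*c^3*s^4*q^2*C + (2/9:ℝ)*c^3*s^4*q^2*A + (-1/2:ℝ)*c^4*s*D + (-1/9:ℝ)*c^4*s*q^2*D + (5/6:ℝ)*c^4*s^3*D + (-5/4:ℝ)*c^4*s^3*B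 + (2/9:ℝ)*c^4*s^3*q^2*D + (-1/3:ℝ)*c^4*s^3*q^2*B + (-1/6:ℝ)*c^5*C + (1/3:ℝ)*c^5*s^2*C + (-5/36:ℝ)*c^5*s^2*A + (5/12:ℝ)*c^6*s*D + (1/6:ℝ)*c^6*s*B + (1/9:ℝ)*c^6*s*q^2*D + (1/12:ℝ)*c^7*C) * hq
      + ((-3:ℝ)*s*B + (1/12:ℝ)*s^3*D + (3/4:ℝ)*s^3*B + (-5/12:ℝ)*s^5*D + (1/4:ℝ)*s^5*B + (3:ℝ)*c*A + (3/4:ℝ)*c*s^2*C + (11/4:ℝ)*c*s^2*A + (-3/4:ℝ)*c*s^4*C + (5/4:ℝ)*c*s^4*A + (-1/4:ℝ)*c^2*s*D + (-9/4:ℝ)*c^2*s*B + (5/6:ℝ)*c^2*s^3*D + (-1/2:ℝ)*c^2*s^3*B + (-1/4:ℝ)*c^3*C + (-11/12:ℝ)*c^3*A + (-1/2:ℝ)*c^3*s^2*C + (5/6:ℝ)*c^3*s^2*A + (5/4:ℝ)*c^4*s*D + (-3/4:ℝ)*c^4*s*B + (1/4:ℝ)*c^5*C + (-5/12:ℝ)*c^5*A)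 * hcs
  calc |a*A + b*B| = |w₀*P₀ + w₁*P₁ + w₂*P₂| := by rw [key]
    _ ≤ |w₀*P₀ + w₁*P₁| + |w₂*P₂| := abs_add_le _ _
    _ ≤ |w₀*P₀| + |w₁*P₁| + |w₂*P₂| := by gcongr; exact abs_add_le _ _
    _ = w₀*|P₀| + w₁*|P₁| + w₂*|P₂| := by
        rw [abs_mul, abs_mul, abs_mul, abs_of_nonneg hw0n, abs_of_nonneg hw1n,
          abs_of_nonneg hw2n]
    _ ≤ w₀*τ + w₁*τ + w₂*τ := by
        refine add_le_add (add_le_add ?_ ?_) ?_ <;>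
          [exact mul_le_mul_of_nonneg_left hb0 hw0n; exact mul_le_mul_of_nonneg_left hb1 hw1n;
            exact mul_le_mul_of_nonneg_left hb2 hw2n]
    _ = τ := by rw [← add_mul, ← add_mul, hwsum, one_mul]


section slots
variable {p : ℕ} (m : ContinuousMultilinearMap ℝ (fun _ : Fin 3 => (Fin p → ℝ)) ℝ)
private lemma upd3_0 (a b c x : Fin p → ℝ) : Function.update ![a,b,c] 0 x = ![x,b,c] := by
  funext i; fin_cases i <;> simp [Function.update]
private lemma upd3_1 (a b c x : Fin p → ℝ) : Function.update ![a,b,c] 1 x = ![a,x,c] := by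
  funext i; fin_cases i <;> simp [Function.update]
private lemma upd3_2 (a b c x : Fin p → ℝ) : Function.update ![a,b,c] 2 x = ![a,b,x] := by
  funext i; fin_cases i <;> simp [Function.update]
lemma madd0 (b c x y : Fin p → ℝ) : m ![x+y,b,c] = m ![x,b,c] + m ![y,b,c] := by
  have h := m.map_update_add ![x,b,c] 0 x y
  rwa [upd3_0, upd3_0, upd3_0] at h
lemma madd1 (a c x y : Fin p → ℝ) : m ![a,x+y,c] = m ![a,x,c] + m ![a,y,c] := by
  have h := m.map_update_add ![a,x,c] 1 x y
  rwa [upd3_1, upd3_1, upd3_1] at h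
lemma madd2 (a b x y : Fin p → ℝ) : m ![a,b,x+y] = m ![a,b,x] + m ![a,b,y] := by
  have h := m.map_update_add ![a,b,x] 2 x y
  rwa [upd3_2, upd3_2, upd3_2] at h
lemma msmul0 (b c x : Fin p → ℝ) (r : ℝ) : m ![r • x,b,c] = r * m ![x,b,c] := by
  have h := m.map_update_smul ![x,b,c] 0 r x
  rwa [upd3_0, upd3_0, smul_eq_mul] at h
lemma msmul1 (a c x : Fin p → ℝ) (r : ℝ) : m ![a,r • x,c] = r * m ![a,x,c] := by
  have h := m.map_update_smul ![a,x,c] 1 r x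
  rwa [upd3_1, upd3_1, smul_eq_mul] at h
lemma msmul2 (a b x : Fin p → ℝ) (r : ℝ) : m ![a,b,r • x] = r * m ![a,b,x] := by
  have h := m.map_update_smul ![a,b,x] 2 r x
  rwa [upd3_2, upd3_2, smul_eq_mul] at h
end slots

lemma fisher_tri_bound {p : ℕ} (F : Matrix (Fin p) (Fin p) ℝ) (hFpd : F.PosDef) (τ : ℝ)
    (m : ContinuousMultilinearMap ℝ (fun _ : Fin 3 => (Fin p → ℝ)) ℝ)
    (hs12 : ∀ a b c : Fin p → ℝ, m ![a,b,c] = m ![b,a,c])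
    (hs23 : ∀ a b c : Fin p → ℝ, m ![a,b,c] = m ![a,c,b])
    (hdiag : ∀ z : Fin p → ℝ, |m ![z,z,z]| ≤ τ * Real.sqrt (z ⬝ᵥ F.mulVec z) ^ 3)
    (u v : Fin p → ℝ) :
    |m ![v,u,u]| ≤ τ * (u ⬝ᵥ F.mulVec u) * Real.sqrt (v ⬝ᵥ F.mulVec v) := by
  have ht : Fᵀ = F := by
    have := hFpd.1
    rwa [Matrix.IsHermitian, Matrix.conjTranspose_eq_transpose_of_trivial] at this
  have hsy : ∀ x y : Fin p → ℝ, x ⬝ᵥ F.mulVec y = y ⬝ᵥ F.mulVec x := by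
    intro x y
    calc x ⬝ᵥ F *ᵥ y = x ᵥ* F ⬝ᵥ y := dotProduct_mulVec _ _ _
      _ = x ᵥ* Fᵀ ⬝ᵥ y := by rw [ht]
      _ = (F *ᵥ x) ⬝ᵥ y := by rw [Matrix.vecMul_transpose]
      _ = y ⬝ᵥ F *ᵥ x := dotProduct_comm _ _
  have hnn : ∀ x : Fin p → ℝ, 0 ≤ x ⬝ᵥ F.mulVec x := fun x => by
    have := Matrix.PosSemidef.re_dotProduct_nonneg hFpd.posSemidef x
    simpa using this
  have hpos : ∀ x : Fin p → ℝ, x ≠ 0 → 0 < x ⬝ᵥ F.mulVec x := fun x hx => by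
    have := Matrix.PosDef.re_dotProduct_pos hFpd hx
    simpa using this
  have hdsmul : ∀ (a b : ℝ) (x y : Fin p → ℝ),
      (a • x) ⬝ᵥ F.mulVec (b • y) = a * b * (x ⬝ᵥ F.mulVec y) := by
    intro a b x y
    rw [Matrix.mulVec_smul, smul_dotProduct, dotProduct_smul, smul_eq_mul, smul_eq_mul]
    ring
  have hexp : ∀ (a b : ℝ) (x y : Fin p → ℝ),
      (a • x + b • y) ⬝ᵥ F.mulVec (a • x + b • y) =
        a^2 * (x ⬝ᵥ F.mulVec x) + 2*a*b*(x ⬝ᵥ F.mulVec y) + b^2 * (y ⬝ᵥ F.mulVec y) := by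
    intro a b x y
    rw [Matrix.mulVec_add, dotProduct_add, add_dotProduct, add_dotProduct,
      hdsmul a a, hdsmul a b, hdsmul b a, hdsmul b b, hsy y x]
    ring
  rcases eq_or_ne u 0 with hu | hu
  · subst hu
    have h0 : m ![v, 0, 0] = 0 := by
      have h := msmul1 m v (0 : Fin p → ℝ) (0 : Fin p → ℝ) (0:ℝ)
      rw [zero_smul, zero_mul] at h
      exact h
    rw [h0, zero_dotProduct]
    simp
  · have hupos := hpos u hu
    set Nu := Real.sqrt (u ⬝ᵥ F.mulVec u) with hNudef
    have hNu : 0 < Nu := Real.sqrt_pos.2 hupos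
    have hNu2 : Nu^2 = u ⬝ᵥ F.mulVec u := Real.sq_sqrt (hnn u)
    obtain ⟨u', hu'def⟩ : ∃ x : Fin p → ℝ, x = Nu⁻¹ • u := ⟨_, rfl⟩
    have huu' : u = Nu • u' := by rw [hu'def, smul_smul, mul_inv_cancel₀ hNu.ne', one_smul]
    have hu'1 : u' ⬝ᵥ F.mulVec u' = 1 := by
      rw [hu'def, hdsmul, ← hNu2]
      field_simp
    set α := u' ⬝ᵥ F.mulVec v with hαdef
    set w₀ : Fin p → ℝ := v - α • u' with hw₀def
    have hvw : v = α • u' + w₀ := by rw [hw₀def]; abel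
    have horth : u' ⬝ᵥ F.mulVec w₀ = 0 := by
      rw [hw₀def, Matrix.mulVec_sub, dotProduct_sub, Matrix.mulVec_smul, dotProduct_smul,
        smul_eq_mul, hu'1, mul_one, ← hαdef, sub_self]
    have hBw : ∀ b : Fin p → ℝ, m ![b, u', u'] = m ![u', u', b] := by
      intro b; rw [hs12, hs23]
    have hA : |m ![u',u',u']| ≤ τ := by
      have h := hdiag u'
      rwa [hu'1, Real.sqrt_one, one_pow, mul_one] at h
    rcases eq_or_ne w₀ 0 with hw0 | hw0
    · -- v = α • u'
      have hvα : v = α • u' := by rw [hvw, hw0, add_zero]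
      have hval : m ![v,u,u] = α * Nu^2 * m ![u',u',u'] := by
        rw [hvα, huu', msmul0, msmul1, msmul2]; ring
      have hvv : Real.sqrt (v ⬝ᵥ F.mulVec v) = |α| := by
        rw [hvα, hdsmul, hu'1, mul_one, Real.sqrt_mul_self_eq_abs]
      rw [hval, hvv, ← hNu2]
      have habs : |α * Nu^2 * m ![u',u',u']| = |α| * Nu^2 * |m ![u',u',u']| := by
        rw [abs_mul, abs_mul, abs_of_nonneg (sq_nonneg Nu)]
      rw [habs]
      have hb := mul_le_mul_of_nonneg_left hA (show (0:ℝ) ≤ |α| * Nu^2 by positivity)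
      nlinarith [hb]
    · set Nw := Real.sqrt (w₀ ⬝ᵥ F.mulVec w₀) with hNwdef
      have hNw : 0 < Nw := Real.sqrt_pos.2 (hpos w₀ hw0)
      have hNw2 : Nw^2 = w₀ ⬝ᵥ F.mulVec w₀ := Real.sq_sqrt (hnn w₀)
      obtain ⟨w, hwdef⟩ : ∃ x : Fin p → ℝ, x = Nw⁻¹ • w₀ := ⟨_, rfl⟩
      have hww0 : w₀ = Nw • w := by rw [hwdef, smul_smul, mul_inv_cancel₀ hNw.ne', one_smul]
      have hw1 : w ⬝ᵥ F.mulVec w = 1 := by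
        rw [hwdef, hdsmul, ← hNw2]
        field_simp
      have ho : u' ⬝ᵥ F.mulVec w = 0 := by
        rw [hwdef, Matrix.mulVec_smul, dotProduct_smul, smul_eq_mul, horth, mul_zero]
      have hv2 : v = α • u' + Nw • w := by rw [← hww0]; exact hvw
      have hvFv : v ⬝ᵥ F.mulVec v = α^2 + Nw^2 := by
        rw [hv2, hexp, hu'1, ho, hw1]; ring
      set Nv := Real.sqrt (v ⬝ᵥ F.mulVec v) with hNvdef
      have hNv2 : Nv^2 = α^2 + Nw^2 := by rw [hNvdef, Real.sq_sqrt (hnn v), hvFv]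
      have hNv : 0 < Nv := by
        rw [hNvdef]
        apply Real.sqrt_pos.2
        rw [hvFv]; positivity
      set A := m ![u',u',u'] with hAdef
      set B := m ![u',u',w] with hBdef
      set C := m ![u',w,w] with hCdef
      set D := m ![w,w,w] with hDdef
      have hh : ∀ c s : ℝ, c^2 + s^2 = 1 →
          |c^3*A + 3*(c^2*s)*B + 3*(c*s^2)*C + s^3*D| ≤ τ := by
        intro c s h1
        have hz := hdiag (c • u' + s • w)
        have hzn : (c • u' + s • w) ⬝ᵥ F.mulVec (c • u' + s • w) = 1 := by
          rw [hexp, hu'1, ho, hw1]; linear_combination h1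
        rw [hzn, Real.sqrt_one, one_pow, mul_one] at hz
        have e1 : m ![w,u',u'] = B := hBw w
        have e2 : m ![u',w,u'] = B := hs23 _ _ _
        have e3 : m ![w,u',w] = C := hs12 _ _ _
        have e4 : m ![w,w,u'] = C := by rw [hs23]; exact hs12 _ _ _
        have hval : m ![c • u' + s • w, c • u' + s • w, c • u' + s • w] =
            c^3*A + 3*(c^2*s)*B + 3*(c*s^2)*C + s^3*D := by
          simp only [madd0, madd1, madd2, msmul0, msmul1, msmul2]
          rw [e1, e2, e3, e4, ← hAdef, ← hBdef, ← hCdef, ← hDdef]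
          ring
        rwa [hval] at hz
      have hmain := fisher_core A B C D τ hh (α/Nv) (Nw/Nv)
        (by field_simp; linarith [hNv2])
      have hfactor : m ![v,u,u] = Nu^2 * Nv * ((α/Nv)*A + (Nw/Nv)*B) := by
        have hval2 : m ![v,u,u] = α * Nu^2 * A + Nw * Nu^2 * B := by
          rw [hv2, huu', madd0, msmul0, msmul0, msmul1, msmul1, msmul2, msmul2,
            hBw w, ← hAdef, ← hBdef]
          ring
        rw [hval2]
        field_simp
      rw [hfactor, ← hNu2]
      have habs : |Nu^2 * Nv * ((α/Nv)*A + (Nw/Nv)*B)| =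
          Nu^2 * Nv * |(α/Nv)*A + (Nw/Nv)*B| := by
        rw [abs_mul, abs_of_nonneg (show (0:ℝ) ≤ Nu^2 * Nv by positivity)]
      rw [habs]
      have hb := mul_le_mul_of_nonneg_left hmain (show (0:ℝ) ≤ Nu^2 * Nv by positivity)
      nlinarith [hb]


lemma fisher_quad_expand {p : ℕ}
    (m : ContinuousMultilinearMap ℝ (fun _ : Fin 2 => (Fin p → ℝ)) ℝ) (u : Fin p → ℝ) :
    m ![u,u] = ∑ i : Fin p, ∑ j : Fin p,
      u i * u j * m ![(Pi.single i 1 : Fin p → ℝ), (Pi.single j 1 : Fin p → ℝ)] := by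
  classical
  have hdec : u = ∑ i : Fin p, u i • (Pi.single i 1 : Fin p → ℝ) := by
    funext j
    rw [Finset.sum_apply]
    simp [Pi.single_apply, Finset.sum_ite_eq', mul_comm]
  have h1 : m ![u,u] = m (fun _ : Fin 2 => ∑ i : Fin p, u i • (Pi.single i 1 : Fin p → ℝ)) := by
    congr 1
    funext k
    fin_cases k <;> simpa using hdec
  rw [h1, ContinuousMultilinearMap.map_sum]
  rw [← Equiv.sum_comp (finTwoArrowEquiv (Fin p)).symm]
  rw [Fintype.sum_prod_type]
  refine Finset.sum_congr rfl fun i _ => Finset.sum_congr rfl fun j _ => ?_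
  have e1 : ((finTwoArrowEquiv (Fin p)).symm (i, j)) = ![i, j] := rfl
  rw [e1]
  have e2 : (fun k : Fin 2 => u (![i,j] k) • (Pi.single (![i,j] k) 1 : Fin p → ℝ)) =
      (fun k : Fin 2 => (![u i, u j] k) • (![(Pi.single i 1 : Fin p → ℝ), Pi.single j 1] k)) := by
    funext k; fin_cases k <;> simp
  rw [e2, m.map_smul_univ]
  simp [Fin.prod_univ_two, mul_assoc]


lemma fisher_sym12 {p : ℕ} (f : (Fin p → ℝ) → ℝ) (hf : ContDiff ℝ 4 f) (x : Fin p → ℝ)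
    (a b c : Fin p → ℝ) :
    iteratedFDeriv ℝ 3 f x ![a,b,c] = iteratedFDeriv ℝ 3 f x ![b,a,c] := by
  have hinit1 : Fin.init ![a,b,c] = ![a,b] := by funext i; fin_cases i <;> simp [Fin.init]
  have hinit2 : Fin.init ![b,a,c] = ![b,a] := by funext i; fin_cases i <;> simp [Fin.init]
  have hlast1 : (![a,b,c]) (Fin.last 2) = c := rfl
  have hlast2 : (![b,a,c]) (Fin.last 2) = c := rfl
  have L1 := iteratedFDeriv_succ_apply_right (𝕜 := ℝ) (f := f) (x := x) (n := 2) ![a,b,c]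
  have L2 := iteratedFDeriv_succ_apply_right (𝕜 := ℝ) (f := f) (x := x) (n := 2) ![b,a,c]
  rw [hinit1, hlast1] at L1
  rw [hinit2, hlast2] at L2
  rw [L1, L2]
  congr 1
  rw [iteratedFDeriv_two_apply, iteratedFDeriv_two_apply]
  simp only [Matrix.cons_val_zero, Matrix.cons_val_one, Matrix.head_cons]
  exact ((hf.fderiv_right (by norm_num)).contDiffAt.isSymmSndFDerivAt
    (n := 3) (by norm_num)).eq a b

lemma fisher_sym23 {p : ℕ} (f : (Fin p → ℝ) → ℝ) (hf : ContDiff ℝ 4 f) (x : Fin p → ℝ)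
    (a b c : Fin p → ℝ) :
    iteratedFDeriv ℝ 3 f x ![a,b,c] = iteratedFDeriv ℝ 3 f x ![a,c,b] := by
  have htail1 : Fin.tail ![a,b,c] = ![b,c] := by funext i; fin_cases i <;> simp [Fin.tail]
  have htail2 : Fin.tail ![a,c,b] = ![c,b] := by funext i; fin_cases i <;> simp [Fin.tail]
  have L1 := iteratedFDeriv_succ_apply_left (𝕜 := ℝ) (f := f) (x := x) (n := 2) ![a,b,c]
  have L2 := iteratedFDeriv_succ_apply_left (𝕜 := ℝ) (f := f) (x := x) (n := 2) ![a,c,b]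
  rw [htail1] at L1
  rw [htail2] at L2
  simp only [Matrix.cons_val_zero] at L1 L2
  rw [L1, L2]
  have hHdiff : Differentiable ℝ (iteratedFDeriv ℝ 2 f) :=
    (hf.iteratedFDeriv_right (by norm_num)).differentiable (n := 2) (by norm_num)
  have key : ∀ b c : Fin p → ℝ,
      fderiv ℝ (iteratedFDeriv ℝ 2 f) x a ![b,c] =
        fderiv ℝ (fun y => iteratedFDeriv ℝ 2 f y ![b,c]) x a := by
    intro b c
    have hcomp := ((ContinuousMultilinearMap.apply ℝ (fun _ : Fin 2 => (Fin p → ℝ)) ℝ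
      ![b,c]).hasFDerivAt.comp x (hHdiff x).hasFDerivAt).fderiv
    calc fderiv ℝ (iteratedFDeriv ℝ 2 f) x a ![b,c]
        = ((ContinuousMultilinearMap.apply ℝ (fun _ : Fin 2 => (Fin p → ℝ)) ℝ
            ![b,c]).comp (fderiv ℝ (iteratedFDeriv ℝ 2 f) x)) a := rfl
      _ = fderiv ℝ (⇑(ContinuousMultilinearMap.apply ℝ (fun _ : Fin 2 => (Fin p → ℝ)) ℝ
            ![b,c]) ∘ (iteratedFDeriv ℝ 2 f)) x a := by rw [hcomp]
      _ = fderiv ℝ (fun y => iteratedFDeriv ℝ 2 f y ![b,c]) x a := rfl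
  have heq : (fun y => iteratedFDeriv ℝ 2 f y ![b,c]) =
      (fun y => iteratedFDeriv ℝ 2 f y ![c,b]) := by
    funext y
    rw [iteratedFDeriv_two_apply, iteratedFDeriv_two_apply]
    simp only [Matrix.cons_val_zero, Matrix.cons_val_one, Matrix.head_cons]
    exact (hf.contDiffAt.isSymmSndFDerivAt (n := 4) (by norm_num)).eq b c
  rw [key b c, heq, ← key c b]

lemma fisher_hess_quad {p : ℕ} (f : (Fin p → ℝ) → ℝ) (y u : Fin p → ℝ) :
    u ⬝ᵥ (hessMat f y).mulVec u = iteratedFDeriv ℝ 2 f y ![u,u] := by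
  rw [fisher_quad_expand (iteratedFDeriv ℝ 2 f y) u]
  simp only [dotProduct, Matrix.mulVec, hessMat, Matrix.of_apply, Finset.mul_sum]
  exact Finset.sum_congr rfl fun i _ => Finset.sum_congr rfl fun j _ => by ring

end FisherHelpers

/-- Under the Fisher-smoothness assumptions (`f` is `C⁴`, `F = -∇²f(θ)` positive definite,
third-order smoothness with parameters `(τ₃, F, r)` at `θ`), for every `u ∈ ℝ^p` and every
`θ'` with `‖F^{1/2}(θ'-θ)‖₂ ≤ r`,
`(1 - τ₃ r) ‖F^{1/2}u‖₂² ≤ ⟨(-∇²f(θ'))u, u⟩ ≤ (1 + τ₃ r) ‖F^{1/2}u‖₂²`. -/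
theorem fisher_quadratic_comparison {p : ℕ} (f : (Fin p → ℝ) → ℝ) (hf : ContDiff ℝ 4 f)
    (θ : Fin p → ℝ) (F : Matrix (Fin p) (Fin p) ℝ)
    (hFhess : F = -hessMat f θ) (hFpd : F.PosDef) (τ₃ r : ℝ)
    (hsmooth : ∀ u z : Fin p → ℝ, Real.sqrt (u ⬝ᵥ F.mulVec u) ≤ r →
      |d3 f (θ + u) z| ≤ τ₃ * Real.sqrt (z ⬝ᵥ F.mulVec z) ^ 3)
    (u : Fin p → ℝ)
    (θ' : Fin p → ℝ) (hθ' : Real.sqrt ((θ' - θ) ⬝ᵥ F.mulVec (θ' - θ)) ≤ r) :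
    (1 - τ₃ * r) * (u ⬝ᵥ F.mulVec u) ≤ u ⬝ᵥ (-hessMat f θ').mulVec u ∧
      u ⬝ᵥ (-hessMat f θ').mulVec u ≤ (1 + τ₃ * r) * (u ⬝ᵥ F.mulVec u) := by
  rcases eq_or_ne u 0 with hu | hu
  · subst hu
    simp [zero_dotProduct]
  · set v : Fin p → ℝ := θ' - θ with hvdef
    have huF : 0 < u ⬝ᵥ F.mulVec u := by
      have := Matrix.PosDef.re_dotProduct_pos hFpd hu
      simpa using this
    have hvnn : 0 ≤ v ⬝ᵥ F.mulVec v := by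
      have := Matrix.PosSemidef.re_dotProduct_nonneg hFpd.posSemidef v
      simpa using this
    have hτ : 0 ≤ τ₃ := by
      have hc : Real.sqrt ((0 : Fin p → ℝ) ⬝ᵥ F.mulVec 0) ≤ r := by
        rw [zero_dotProduct, Real.sqrt_zero]
        exact le_trans (Real.sqrt_nonneg _) hθ'
      have h := hsmooth 0 u hc
      have hup : 0 < Real.sqrt (u ⬝ᵥ F.mulVec u) := Real.sqrt_pos.2 huF
      nlinarith [abs_nonneg (d3 f (θ + 0) u), pow_pos hup 3]
    -- the function along the segment
    set g : ℝ → ℝ := fun t => iteratedFDeriv ℝ 2 f (θ + t • v) ![u,u] with hgdef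
    have hHdiff : Differentiable ℝ (iteratedFDeriv ℝ 2 f) :=
      (hf.iteratedFDeriv_right (by norm_num)).differentiable (n := 2) (by norm_num)
    have hderiv : ∀ t : ℝ,
        HasDerivAt g (iteratedFDeriv ℝ 3 f (θ + t • v) ![v,u,u]) t := by
      intro t
      have hγ : HasDerivAt (fun t : ℝ => θ + t • v) v t := by
        simpa using ((hasDerivAt_id t).smul_const v).const_add θ
      have h1 : HasDerivAt (fun t : ℝ => iteratedFDeriv ℝ 2 f (θ + t • v))
          (fderiv ℝ (iteratedFDeriv ℝ 2 f) (θ + t • v) v) t :=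
        (hHdiff (θ + t • v)).hasFDerivAt.comp_hasDerivAt t hγ
      have h2 := (ContinuousMultilinearMap.apply ℝ (fun _ : Fin 2 => (Fin p → ℝ)) ℝ
          ![u,u]).hasFDerivAt.comp_hasDerivAt t h1
      have h3 : iteratedFDeriv ℝ 3 f (θ + t • v) ![v,u,u] =
          fderiv ℝ (iteratedFDeriv ℝ 2 f) (θ + t • v) v ![u,u] := by
        have ht : Fin.tail ![v,u,u] = ![u,u] := by funext i; fin_cases i <;> simp [Fin.tail]
        rw [iteratedFDeriv_succ_apply_left, ht]
        rfl
      rw [h3]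
      exact h2
    have hbound : ∀ t ∈ Set.Icc (0:ℝ) 1,
        ‖iteratedFDeriv ℝ 3 f (θ + t • v) ![v,u,u]‖ ≤ τ₃ * (u ⬝ᵥ F.mulVec u) * r := by
      intro t ht
      have hcond : Real.sqrt ((t • v) ⬝ᵥ F.mulVec (t • v)) ≤ r := by
        have hsq : (t • v) ⬝ᵥ F.mulVec (t • v) = t^2 * (v ⬝ᵥ F.mulVec v) := by
          rw [Matrix.mulVec_smul, smul_dotProduct, dotProduct_smul, smul_eq_mul, smul_eq_mul]
          ring
        rw [hsq, Real.sqrt_mul (sq_nonneg t), Real.sqrt_sq_eq_abs]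
        have h1 : |t| ≤ 1 := by rw [abs_of_nonneg ht.1]; exact ht.2
        calc |t| * Real.sqrt (v ⬝ᵥ F.mulVec v)
            ≤ 1 * Real.sqrt (v ⬝ᵥ F.mulVec v) :=
              mul_le_mul_of_nonneg_right h1 (Real.sqrt_nonneg _)
          _ = Real.sqrt (v ⬝ᵥ F.mulVec v) := one_mul _
          _ ≤ r := hθ'
      have htri := fisher_tri_bound F hFpd τ₃ (iteratedFDeriv ℝ 3 f (θ + t • v))
        (fun a b c => fisher_sym12 f hf _ a b c) (fun a b c => fisher_sym23 f hf _ a b c)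
        (fun z => hsmooth (t • v) z hcond) u v
      have hle : τ₃ * (u ⬝ᵥ F.mulVec u) * Real.sqrt (v ⬝ᵥ F.mulVec v)
          ≤ τ₃ * (u ⬝ᵥ F.mulVec u) * r :=
        mul_le_mul_of_nonneg_left hθ' (by positivity)
      rw [Real.norm_eq_abs]
      exact le_trans htri hle
    have hmvt := (convex_Icc (0:ℝ) 1).norm_image_sub_le_of_norm_hasDerivWithin_le
      (fun t _ => (hderiv t).hasDerivWithinAt) hbound
      (Set.left_mem_Icc.2 zero_le_one) (Set.right_mem_Icc.2 zero_le_one)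
    have habs : |g 1 - g 0| ≤ τ₃ * (u ⬝ᵥ F.mulVec u) * r := by
      simpa [Real.norm_eq_abs] using hmvt
    have hg1 : g 1 = iteratedFDeriv ℝ 2 f θ' ![u,u] := by
      rw [hgdef]
      simp [hvdef]
    have hg0 : g 0 = iteratedFDeriv ℝ 2 f θ ![u,u] := by
      rw [hgdef]; simp
    have e1 : u ⬝ᵥ (-hessMat f θ').mulVec u = - g 1 := by
      rw [Matrix.neg_mulVec, dotProduct_neg, fisher_hess_quad, hg1]
    have e2 : u ⬝ᵥ F.mulVec u = - g 0 := by
      rw [hFhess, Matrix.neg_mulVec, dotProduct_neg, fisher_hess_quad, hg0]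
    obtain ⟨hL, hR⟩ := abs_le.1 habs
    rw [e2] at hL hR ⊢
    rw [e1]
    constructor <;> nlinarith [hL, hR]
end

section
/- Let f : ℝ^p → ℝ be concave and four times continuously differentiable, θ, θ̃, β ∈ ℝ^p, F = −∇²f(θ) positive definite, r = ‖F^{-1/2}β‖₂. Suppose f satisfies the third-order smoothness bound with parameters (τ₃, F, 4r) at θ, that τ₃r ≤ 1/16, ∇f(θ) = 0, and ∇f(θ̃) + β = 0. Then ‖F^{1/2}(θ̃ − θ)‖₂ ≤ 4r. -/
set_option maxHeartbeats 1000000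


open Matrix

/-- Cauchy–Schwarz inequality for a positive semidefinite real matrix. -/
lemma psd_cauchy_schwarz {p : ℕ} {M : Matrix (Fin p) (Fin p) ℝ} (hM : M.PosSemidef)
    (x y : Fin p → ℝ) :
    (x ⬝ᵥ M.mulVec y) ^ 2 ≤ (x ⬝ᵥ M.mulVec x) * (y ⬝ᵥ M.mulVec y) := by
  have ht : Mᵀ = M := by
    have := hM.1
    rwa [Matrix.IsHermitian, conjTranspose_eq_transpose_of_trivial] at this
  have hsymm : y ⬝ᵥ M.mulVec x = x ⬝ᵥ M.mulVec y := by
    rw [dotProduct_mulVec, dotProduct_comm, ← mulVec_transpose, ht]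
  have key : ∀ t : ℝ, 0 ≤ (y ⬝ᵥ M.mulVec y) * (t * t) + (2 * (x ⬝ᵥ M.mulVec y)) * t
      + (x ⬝ᵥ M.mulVec x) := by
    intro t
    have h0 := hM.dotProduct_mulVec_nonneg (x + t • y)
    simp only [mulVec_add, mulVec_smul, dotProduct_add, add_dotProduct, dotProduct_smul,
      smul_dotProduct, smul_eq_mul, star_trivial, hsymm] at h0
    nlinarith [h0]
  have hd := discrim_le_zero key
  rw [discrim] at hd
  nlinarith [hd]

/-- The second iterated derivative applied to `![u, u]` equals the quadratic form of the
Hessian matrix. -/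
lemma quad_form_eq {p : ℕ} (f : (Fin p → ℝ) → ℝ) (x u : Fin p → ℝ) :
    iteratedFDeriv ℝ 2 f x ![u, u] = u ⬝ᵥ (hessMat f x).mulVec u := by
  have hu : u = ∑ i, u i • (Pi.single i 1 : Fin p → ℝ) := by
    funext j
    simp [Finset.sum_apply, Pi.single_apply]
  rw [iteratedFDeriv_two_apply]
  simp only [Matrix.cons_val_zero, Matrix.cons_val_one, Matrix.head_cons]
  set L := fderiv ℝ (fderiv ℝ f) x with hL
  have h1 : L u = ∑ i, u i • L (Pi.single i 1) := by
    conv_lhs => rw [hu]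
    rw [map_sum]
    simp only [_root_.map_smul]
  have h2 : ∀ T : (Fin p → ℝ) →L[ℝ] ℝ, T u = ∑ j, T (Pi.single j 1) * u j := by
    intro T
    conv_lhs => rw [hu]
    rw [map_sum]
    refine Finset.sum_congr rfl fun j _ => ?_
    rw [_root_.map_smul, smul_eq_mul, mul_comm]
  rw [h1, ContinuousLinearMap.sum_apply]
  simp only [ContinuousLinearMap.smul_apply, smul_eq_mul]
  simp only [dotProduct, mulVec, hessMat, Matrix.of_apply]
  refine Finset.sum_congr rfl fun i _ => ?_
  rw [h2 (L (Pi.single i 1))]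
  simp only [iteratedFDeriv_two_apply, Matrix.cons_val_zero, Matrix.cons_val_one,
    Matrix.head_cons, hL]

lemma line_hasDerivAt {p : ℕ} (θ u : Fin p → ℝ) (t : ℝ) :
    HasDerivAt (fun t : ℝ => θ + t • u) u t := by
  simpa using ((hasDerivAt_id t).smul_const u).const_add θ

lemma g1_hasDerivAt {p : ℕ} {f : (Fin p → ℝ) → ℝ} (hf : ContDiff ℝ 4 f)
    (θ u : Fin p → ℝ) (t : ℝ) :
    HasDerivAt (fun t : ℝ => fderiv ℝ f (θ + t • u) u)
      (iteratedFDeriv ℝ 2 f (θ + t • u) ![u, u]) t := by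
  have hdf : DifferentiableAt ℝ (fderiv ℝ f) (θ + t • u) :=
    ((hf.fderiv_right (m := 1) (by norm_num)).differentiable (by norm_num)).differentiableAt
  have h1 : HasDerivAt (fun t : ℝ => fderiv ℝ f (θ + t • u))
      (fderiv ℝ (fderiv ℝ f) (θ + t • u) u) t :=
    hdf.hasFDerivAt.comp_hasDerivAt t (line_hasDerivAt θ u t)
  have h2 := h1.clm_apply (hasDerivAt_const t u)
  simp only [add_zero, ContinuousLinearMap.zero_apply, map_zero] at h2
  rw [iteratedFDeriv_two_apply]
  simpa using h2

lemma g2_hasDerivAt {p : ℕ} {f : (Fin p → ℝ) → ℝ} (hf : ContDiff ℝ 4 f)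
    (θ u : Fin p → ℝ) (t : ℝ) :
    HasDerivAt (fun t : ℝ => iteratedFDeriv ℝ 2 f (θ + t • u) ![u, u])
      (d3 f (θ + t • u) u) t := by
  have hdf : DifferentiableAt ℝ (iteratedFDeriv ℝ 2 f) (θ + t • u) :=
    ((hf.iteratedFDeriv_right (m := 1) (by norm_num)).differentiable (by norm_num)).differentiableAt
  have h1 : HasDerivAt (fun t : ℝ => iteratedFDeriv ℝ 2 f (θ + t • u))
      (fderiv ℝ (iteratedFDeriv ℝ 2 f) (θ + t • u) u) t :=
    hdf.hasFDerivAt.comp_hasDerivAt t (line_hasDerivAt θ u t)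
  have h2 := (ContinuousMultilinearMap.apply ℝ (fun _ : Fin 2 => (Fin p → ℝ)) ℝ
      ![u, u]).hasFDerivAt.comp_hasDerivAt t h1
  have h3 : d3 f (θ + t • u) u
      = fderiv ℝ (iteratedFDeriv ℝ 2 f) (θ + t • u) u ![u, u] := by
    rfl
  rw [h3]
  exact h2

/-- Localization of the perturbed maximizer: if `f` is concave and `C⁴`,
`F = -∇²f(θ)` is positive definite, `r = ‖F^{-1/2}β‖₂`, `f` satisfies the third-order
smoothness with parameters `(τ₃, F, 4r)` at `θ`, `τ₃ r ≤ 1/16`, `∇f(θ) = 0` and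
`∇f(θ̃) + β = 0`, then `‖F^{1/2}(θ̃ - θ)‖₂ ≤ 4r`. -/
theorem perturbed_maximizer_localization {p : ℕ} (f : (Fin p → ℝ) → ℝ)
    (hconc : ConcaveOn ℝ Set.univ f) (hf : ContDiff ℝ 4 f)
    (θ θt β : Fin p → ℝ) (F : Matrix (Fin p) (Fin p) ℝ)
    (hFhess : F = -hessMat f θ) (hFpd : F.PosDef) (τ₃ : ℝ)
    (r : ℝ) (hrdef : r = Real.sqrt (β ⬝ᵥ F⁻¹.mulVec β))
    (hsmooth : ∀ u z : Fin p → ℝ, Real.sqrt (u ⬝ᵥ F.mulVec u) ≤ 4 * r →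
      |d3 f (θ + u) z| ≤ τ₃ * Real.sqrt (z ⬝ᵥ F.mulVec z) ^ 3)
    (hτr : τ₃ * r ≤ 1 / 16)
    (hgrad : fderiv ℝ f θ = 0)
    (hgradt : ∀ v : Fin p → ℝ, fderiv ℝ f θt v + β ⬝ᵥ v = 0) :
    Real.sqrt ((θt - θ) ⬝ᵥ F.mulVec (θt - θ)) ≤ 4 * r := by
  by_contra hcon
  push_neg at hcon
  set u : Fin p → ℝ := θt - θ with hu
  set N : ℝ := Real.sqrt (u ⬝ᵥ F.mulVec u) with hN
  -- basic positivity facts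
  have hr0 : 0 ≤ r := hrdef ▸ Real.sqrt_nonneg _
  have hN_pos : 0 < N := lt_of_le_of_lt (by positivity) hcon
  have hQu_nonneg : 0 ≤ u ⬝ᵥ F.mulVec u := by
    have := hFpd.posSemidef.dotProduct_mulVec_nonneg u
    simpa using this
  have hQu : u ⬝ᵥ F.mulVec u = N ^ 2 := (Real.sq_sqrt hQu_nonneg).symm
  -- the derivative of f along the line, and second derivative
  set g₁ : ℝ → ℝ := fun t => fderiv ℝ f (θ + t • u) u with hg₁
  set g₂ : ℝ → ℝ := fun t => iteratedFDeriv ℝ 2 f (θ + t • u) ![u, u] with hg₂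
  have hpt0 : θ + (0 : ℝ) • u = θ := by simp
  have hpt1 : θ + (1 : ℝ) • u = θt := by
    rw [one_smul, hu, add_sub_cancel]
  have hg1_0 : g₁ 0 = 0 := by
    simp only [hg₁, hpt0, hgrad]
    rfl
  have hg1_1 : g₁ 1 = -(β ⬝ᵥ u) := by
    have := hgradt u
    simp only [hg₁, hpt1]
    linarith
  have hg2_0 : g₂ 0 = -N ^ 2 := by
    have hH : hessMat f θ = -F := by rw [hFhess, neg_neg]
    simp only [hg₂, hpt0]
    rw [quad_form_eq, hH, neg_mulVec, dotProduct_neg, hQu]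
  -- concavity of f along the line
  have hφderiv : ∀ t : ℝ, HasDerivAt (fun t : ℝ => f (θ + t • u)) (g₁ t) t := fun t =>
    ((hf.differentiable (by norm_num)) _).hasFDerivAt.comp_hasDerivAt t (line_hasDerivAt θ u t)
  have hφconc : ConcaveOn ℝ Set.univ (fun t : ℝ => f (θ + t • u)) := by
    have h := hconc.comp_affineMap (AffineMap.lineMap θ θt : ℝ →ᵃ[ℝ] (Fin p → ℝ))
    rw [Set.preimage_univ] at h
    have heq : (f ∘ (AffineMap.lineMap θ θt : ℝ →ᵃ[ℝ] (Fin p → ℝ)))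
        = fun t : ℝ => f (θ + t • u) := by
      funext t
      simp only [Function.comp_apply, AffineMap.lineMap_apply_module, hu]
      congr 1
      module
    rwa [heq] at h
  have hantitone : ∀ s t : ℝ, s < t → g₁ t ≤ g₁ s := fun s t hst =>
    (hφconc.le_slope_of_hasDerivAt (Set.mem_univ s) (Set.mem_univ t) hst (hφderiv t)).trans
      (hφconc.slope_le_of_hasDerivAt (Set.mem_univ s) (Set.mem_univ t) hst (hφderiv s))
  -- the F-norm of t • u
  have hscale : ∀ t : ℝ, 0 ≤ t →
      Real.sqrt ((t • u) ⬝ᵥ F.mulVec (t • u)) = t * N := by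
    intro t ht
    rw [mulVec_smul, smul_dotProduct, dotProduct_smul, smul_eq_mul, smul_eq_mul,
      show t * (t * (u ⬝ᵥ F.mulVec u)) = t ^ 2 * (u ⬝ᵥ F.mulVec u) by ring,
      Real.sqrt_mul (sq_nonneg t), Real.sqrt_sq ht, hN]
  rcases hr0.eq_or_lt with hr | hr
  · -- case r = 0 : then β = 0, g₁ vanishes on [0,1], contradicting g₂ 0 = -N² < 0
    have hβQ : β ⬝ᵥ F⁻¹.mulVec β ≤ 0 := by
      have : Real.sqrt (β ⬝ᵥ F⁻¹.mulVec β) = 0 := by rw [← hrdef, ← hr]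
      exact Real.sqrt_eq_zero'.1 this
    have hβ : β = 0 := by
      by_contra hβne
      have := hFpd.inv.dotProduct_mulVec_pos hβne
      simp only [star_trivial] at this
      linarith
    have hg1_1' : g₁ 1 = 0 := by rw [hg1_1, hβ, zero_dotProduct, neg_zero]
    have hzero : ∀ t ∈ Set.Icc (0 : ℝ) 1, g₁ t = 0 := by
      intro t ⟨ht0, ht1⟩
      refine le_antisymm ?_ ?_
      · rcases ht0.eq_or_lt with h | h
        · rw [← h, hg1_0]
        · rw [← hg1_0]; exact hantitone 0 t h
      · rcases ht1.eq_or_lt with h | h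
        · rw [h, hg1_1']
        · rw [← hg1_1']; exact hantitone t 1 h
    have hmem : (0 : ℝ) ∈ Set.Icc (0 : ℝ) 1 := ⟨le_refl 0, zero_le_one⟩
    have hD1 : HasDerivWithinAt g₁ (g₂ 0) (Set.Icc (0 : ℝ) 1) 0 :=
      (g1_hasDerivAt hf θ u 0).hasDerivWithinAt
    have hD2 : HasDerivWithinAt g₁ 0 (Set.Icc (0 : ℝ) 1) 0 :=
      (hasDerivWithinAt_const (0 : ℝ) (Set.Icc (0 : ℝ) 1) (0 : ℝ)).congr
        (fun y hy => hzero y hy) (hzero 0 hmem)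
    have hud : UniqueDiffWithinAt ℝ (Set.Icc (0 : ℝ) 1) 0 :=
      (uniqueDiffOn_Icc zero_lt_one) 0 hmem
    have heqd := hud.eq hD1.hasFDerivWithinAt hD2.hasFDerivWithinAt
    have : g₂ 0 = 0 := by
      have := congrFun (congrArg DFunLike.coe heqd) 1
      simpa using this
    rw [hg2_0] at this
    nlinarith [hN_pos]
  · -- case r > 0 : Taylor expansion argument
    set s : ℝ := 4 * r / N with hs
    have hs_pos : 0 < s := by positivity
    have hs_lt1 : s < 1 := (div_lt_one hN_pos).2 hcon
    have hsN : s * N = 4 * r := div_mul_cancel₀ _ hN_pos.ne'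
    -- bound on the third derivative along the segment
    have hg3bound : ∀ t ∈ Set.Icc (0 : ℝ) s, ‖d3 f (θ + t • u) u‖ ≤ τ₃ * N ^ 3 := by
      intro t ⟨ht0, hts⟩
      have h1 : Real.sqrt ((t • u) ⬝ᵥ F.mulVec (t • u)) ≤ 4 * r := by
        rw [hscale t ht0, ← hsN]
        exact mul_le_mul_of_nonneg_right hts hN_pos.le
      have := hsmooth (t • u) u h1
      rw [Real.norm_eq_abs, hN]
      exact this
    -- mean value bound for g₂
    have hMVT1 : ∀ x ∈ Set.Icc (0 : ℝ) s, ‖g₂ x - g₂ 0‖ ≤ (τ₃ * N ^ 3) * (x - 0) :=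
      norm_image_sub_le_of_norm_deriv_le_segment'
        (fun x hx => (g2_hasDerivAt hf θ u x).hasDerivWithinAt)
        (fun x hx => hg3bound x (Set.Ico_subset_Icc_self hx))
    have hsmem : s ∈ Set.Icc (0 : ℝ) s := ⟨hs_pos.le, le_refl s⟩
    have hτN3 : 0 ≤ τ₃ * N ^ 3 := by
      have h1 := hMVT1 s hsmem
      have h2 : (0 : ℝ) ≤ ‖g₂ s - g₂ 0‖ := norm_nonneg _
      nlinarith [hs_pos]
    -- mean value bound for ψ t = g₁ t - g₂ 0 * t
    have hψderiv : ∀ t : ℝ, HasDerivAt (fun t : ℝ => g₁ t - g₂ 0 * t) (g₂ t - g₂ 0) t := by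
      intro t
      have h1 := g1_hasDerivAt hf θ u t
      have h2 : HasDerivAt (fun t : ℝ => g₂ 0 * t) (g₂ 0) t := by
        simpa using (hasDerivAt_id t).const_mul (g₂ 0)
      exact h1.sub h2
    have hMVT2 : ∀ x ∈ Set.Icc (0 : ℝ) s,
        ‖(g₁ x - g₂ 0 * x) - (g₁ 0 - g₂ 0 * 0)‖ ≤ ((τ₃ * N ^ 3) * s) * (x - 0) := by
      refine norm_image_sub_le_of_norm_deriv_le_segment'
        (fun x hx => (hψderiv x).hasDerivWithinAt) (fun x hx => ?_)
      have h1 := hMVT1 x (Set.Ico_subset_Icc_self hx)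
      have h2 : (τ₃ * N ^ 3) * (x - 0) ≤ (τ₃ * N ^ 3) * s := by
        apply mul_le_mul_of_nonneg_left _ hτN3
        simpa using hx.2.le
      exact h1.trans h2
    have hkey := hMVT2 s hsmem
    rw [hg1_0] at hkey
    have htaylor : g₁ s ≤ -N ^ 2 * s + (τ₃ * N ^ 3) * s ^ 2 := by
      have h1 : g₁ s - g₂ 0 * s ≤ ((τ₃ * N ^ 3) * s) * s := by
        have := (abs_le.1 (by simpa [Real.norm_eq_abs] using hkey)).2
        linarith
      rw [hg2_0] at h1
      nlinarith [h1]
    -- Cauchy-Schwarz : β ⬝ᵥ u ≤ r * N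
    have hFinv : F⁻¹.mulVec (F.mulVec u) = u := by
      rw [mulVec_mulVec, Matrix.nonsing_inv_mul F (isUnit_iff_ne_zero.mpr hFpd.det_pos.ne'),
        one_mulVec]
    have hCS := psd_cauchy_schwarz hFpd.inv.posSemidef β (F.mulVec u)
    rw [hFinv] at hCS
    have hFuu : F.mulVec u ⬝ᵥ u = N ^ 2 := by rw [dotProduct_comm, hQu]
    have hr2 : β ⬝ᵥ F⁻¹.mulVec β = r ^ 2 := by
      rw [hrdef, Real.sq_sqrt]
      by_contra hneg
      push_neg at hneg
      have : Real.sqrt (β ⬝ᵥ F⁻¹.mulVec β) = 0 := Real.sqrt_eq_zero'.2 hneg.le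
      rw [← hrdef] at this
      linarith
    rw [hFuu, hr2] at hCS
    have hbu : β ⬝ᵥ u ≤ r * N := by nlinarith [sq_nonneg (β ⬝ᵥ u - r * N), mul_pos hr hN_pos]
    -- combine everything
    have hchain : -(β ⬝ᵥ u) ≤ g₁ s := by
      rw [← hg1_1]
      exact hantitone s 1 hs_lt1
    have hA : N ^ 2 * s = 4 * r * N := by linear_combination N * hsN
    have hB : N ^ 3 * s ^ 2 = 16 * r ^ 2 * N := by
      linear_combination (N * (s * N + 4 * r)) * hsN
    have hC : 16 * τ₃ * r ^ 2 ≤ r := by nlinarith [hτr, hr.le]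
    have hD : τ₃ * (N ^ 3 * s ^ 2) = τ₃ * (16 * r ^ 2 * N) := by rw [hB]
    nlinarith [htaylor, hchain, hbu, mul_le_mul_of_nonneg_right hC hN_pos.le,
      mul_pos hr hN_pos]
end
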